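/- Consider the two-point space X = {0,1} with transition rates k(0,1) = a and k(1,0) = b, where a, b > 0, and set λ = min{a/b, b/a}. Then the function F : [0,∞) → [0,∞) defined by F(r) = (ab/2)·ν_{1+λ,λ}( −r/max{a,b} ) is a CD-function, and the Markov generator L satisfies CD_Υ(0,F). -/

import Mathlib

open Real Filter MeasureTheory Set

/-- `Υ(r) = e^r - r - 1`. -/
noncomputable def Ups (r : ℝ) : ℝ := Real.exp r - r - 1

/-- `ν_{c,d}(r) = c Υ'(r) r + Υ(-r) - d Υ(r)`. -/
noncomputable def nuFn (c d r : ℝ) : ℝ :=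
  c * (Real.exp r - 1) * r + Ups (-r) - d * Ups r

/-- A CD-function: continuous and nonnegative on `[0,∞)` with `F(0) = 0`, `F(r)/r`
strictly increasing on `(0,∞)` and `1/F` integrable at `∞`. -/
def IsCDFunction (F : ℝ → ℝ) : Prop :=
  ContinuousOn F (Ici 0) ∧ F 0 = 0 ∧ (∀ r : ℝ, 0 ≤ r → 0 ≤ F r) ∧
  StrictMonoOn (fun r => F r / r) (Ioi 0) ∧
  ∃ c : ℝ, 0 < c ∧ IntegrableOn (fun r => 1 / F r) (Ioi c)

/-- The trivial extension `F₀` of `F : [0,∞) → [0,∞)` by `0` on `(-∞,0)`. -/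
noncomputable def trivExt (F : ℝ → ℝ) : ℝ → ℝ := fun r => if 0 ≤ r then F r else 0

/-- The two-point space `X = {0,1}` is modelled by `Bool` (`false ↔ 0`, `true ↔ 1`);
the jump rate out of the state `x`: `k(0,1) = a`, `k(1,0) = b`. -/
def rate2 (a b : ℝ) (x : Bool) : ℝ := cond x b a

/-- The generator on the two-point space: `L f(x) = k(x,1-x)(f(1-x) - f(x))`. -/
noncomputable def gen2 (a b : ℝ) (f : Bool → ℝ) (x : Bool) : ℝ :=
  rate2 a b x * (f (!x) - f x)

/-- `Ψ_Υ(f)(x) = k(x,1-x) Υ(f(1-x)-f(x))` on the two-point space. -/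
noncomputable def psiUps2 (a b : ℝ) (f : Bool → ℝ) (x : Bool) : ℝ :=
  rate2 a b x * Ups (f (!x) - f x)

/-- `B_{Υ'}(f,g)(x) = k(x,1-x) Υ'(f(1-x)-f(x)) (g(1-x)-g(x))` on the two-point space. -/
noncomputable def bUps2 (a b : ℝ) (f g : Bool → ℝ) (x : Bool) : ℝ :=
  rate2 a b x * (Real.exp (f (!x) - f x) - 1) * (g (!x) - g x)

/-- `Ψ_{2,Υ}(f) = (1/2)(L Ψ_Υ(f) - B_{Υ'}(f,Lf))` on the two-point space. -/
noncomputable def psi2Ups2 (a b : ℝ) (f : Bool → ℝ) (x : Bool) : ℝ :=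
  (1/2) * (gen2 a b (psiUps2 a b f) x - bUps2 a b f (gen2 a b f) x)

noncomputable def hfun (l t : ℝ) : ℝ := nuFn (1 + l) l (-t)

lemma hfun_eq (l t : ℝ) :
    hfun l t = (1+l)*t*(1 - Real.exp (-t)) + (Real.exp t - t - 1)
      - l*(Real.exp (-t) + t - 1) := by
  simp only [hfun, nuFn, Ups, neg_neg]; ring

lemma one_sub_exp_aux (x : ℝ) : (1 - x) * Real.exp x ≤ 1 := by
  have h1 : (-x + 1) * Real.exp x ≤ Real.exp (-x) * Real.exp x :=
    mul_le_mul_of_nonneg_right (Real.add_one_le_exp (-x)) (Real.exp_pos x).le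
  rw [← Real.exp_add, neg_add_cancel, Real.exp_zero] at h1
  nlinarith [h1]

noncomputable def hderiv (l t : ℝ) : ℝ :=
  (1+l)*((1 - Real.exp (-t)) + t * Real.exp (-t)) + (Real.exp t - 1) - l*(1 - Real.exp (-t))

lemma hasDerivAt_hfun (l t : ℝ) : HasDerivAt (hfun l) (hderiv l t) t := by
  have he : HasDerivAt (fun s : ℝ => Real.exp (-s)) (-Real.exp (-t)) t := by
    simpa [Function.comp_def] using (Real.hasDerivAt_exp (-t)).comp t (hasDerivAt_neg t)
  have H := ((((hasDerivAt_id t).const_mul (1+l)).mul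
      ((hasDerivAt_const t (1:ℝ)).sub he)).add
      (((Real.hasDerivAt_exp t).sub (hasDerivAt_id t)).sub (hasDerivAt_const t (1:ℝ)))).sub
      (((he.add (hasDerivAt_id t)).sub (hasDerivAt_const t (1:ℝ))).const_mul l)
  have hfn : hfun l = fun s => (1+l)*s*(1 - Real.exp (-s)) + (Real.exp s - s - 1)
      - l*(Real.exp (-s) + s - 1) := funext (hfun_eq l)
  rw [hfn]
  refine HasDerivAt.congr_deriv H ?_
  simp only [id_eq, hderiv, Pi.sub_apply]; ring

lemma hderiv_nonneg {l t : ℝ} (hl0 : 0 ≤ l) (ht : 0 ≤ t) : 0 ≤ hderiv l t := by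
  have h1 : Real.exp (-t) ≤ 1 := by
    rw [← Real.exp_zero]; exact Real.exp_le_exp.mpr (by linarith)
  have h2 : 1 ≤ Real.exp t := Real.one_le_exp ht
  have h3 : 0 < Real.exp (-t) := Real.exp_pos _
  have h4 : 0 ≤ (1+l) * (t * Real.exp (-t)) :=
    mul_nonneg (by linarith) (mul_nonneg ht h3.le)
  rw [hderiv]; nlinarith [h4]

lemma hfun_continuous (l : ℝ) : Continuous (hfun l) := by
  have hd : Differentiable ℝ (hfun l) := fun x => (hasDerivAt_hfun l x).differentiableAt
  exact hd.continuous

lemma hfun_mono {l : ℝ} (hl0 : 0 ≤ l) : MonotoneOn (hfun l) (Ici 0) := by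
  apply monotoneOn_of_deriv_nonneg (convex_Ici 0) (hfun_continuous l).continuousOn
  · intro x _; exact (hasDerivAt_hfun l x).differentiableAt.differentiableWithinAt
  · intro x hx
    rw [(hasDerivAt_hfun l x).deriv]
    rw [interior_Ici] at hx
    exact hderiv_nonneg hl0 (le_of_lt hx)

lemma hfun_zero (l : ℝ) : hfun l 0 = 0 := by
  rw [hfun_eq]; simp [Real.exp_zero]

lemma hfun_nonneg {l t : ℝ} (hl0 : 0 ≤ l) (ht : 0 ≤ t) : 0 ≤ hfun l t := by
  have := hfun_mono hl0 (self_mem_Ici (a := (0:ℝ))) ht ht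
  rwa [hfun_zero] at this

lemma A_pos {t : ℝ} (ht : 0 < t) : 0 < (t-1)*Real.exp t + 1 + t*t*Real.exp (-t) := by
  nlinarith [one_sub_exp_aux t, mul_pos (mul_pos ht ht) (Real.exp_pos (-t))]

lemma p_pos {t : ℝ} (ht : 0 < t) :
    0 < 2*t*t + t + 1 + (t-1)*(Real.exp t * Real.exp t) := by
  rcases le_total 1 t with h1 | h1
  · nlinarith [Real.exp_pos t, mul_pos (Real.exp_pos t) (Real.exp_pos t)]
  rcases le_total t (1/2) with h2 | h2
  · have hA : (1-t) * Real.exp t < 1 := by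
      have hne : -t ≠ 0 := (neg_lt_zero.mpr ht).ne
      have hh := Real.add_one_lt_exp hne
      have hmm : (-t+1) * Real.exp t < Real.exp (-t) * Real.exp t :=
        mul_lt_mul_of_pos_right hh (Real.exp_pos t)
      rw [← Real.exp_add, neg_add_cancel, Real.exp_zero] at hmm
      nlinarith [hmm]
    have hE : 0 < Real.exp t := Real.exp_pos t
    have hnn : 0 ≤ (1-t) * Real.exp t := mul_nonneg (by linarith) hE.le
    have hsq : ((1-t)*Real.exp t)*((1-t)*Real.exp t) < 1 := by nlinarith
    nlinarith [hsq, mul_nonneg (mul_nonneg ht.le ht.le) (by linarith : (0:ℝ) ≤ 1 - 2*t),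
      (by linarith : (0:ℝ) < 1 - t)]
  · have hA := one_sub_exp_aux (2*t-1)
    have hB : Real.exp (2*t-1) * Real.exp 1 = Real.exp t * Real.exp t := by
      rw [← Real.exp_add, ← Real.exp_add]; ring_nf
    have he1 : Real.exp 1 < 2.7182818286 := Real.exp_one_lt_d9
    have he0 : (0:ℝ) < Real.exp 1 := Real.exp_pos 1
    have hp : 0 < Real.exp (2*t-1) := Real.exp_pos _
    nlinarith [mul_pos hp he0]

lemma q_pos {l t : ℝ} (hl0 : 0 ≤ l) (hl1 : l ≤ 1) (ht : 0 < t) :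
    0 < hderiv l t * t - hfun l t := by
  have hE : Real.exp (-t) * Real.exp t = 1 := by
    rw [← Real.exp_add, neg_add_cancel, Real.exp_zero]
  have hid : hderiv l t * t - hfun l t
      = (1-l) * ((t-1)*Real.exp t + 1 + t*t*Real.exp (-t))
        + l * (Real.exp (-t) * (2*t*t + t + 1) + (t-1)*Real.exp t) := by
    rw [hfun_eq, hderiv]; nlinarith [hE]
  have hA := A_pos ht
  have hP : 0 < Real.exp (-t) * (2*t*t + t + 1) + (t-1)*Real.exp t := by
    have h1 : Real.exp (-t) * (2*t*t + t + 1) + (t-1)*Real.exp t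
        = Real.exp (-t) * (2*t*t + t + 1 + (t-1)*(Real.exp t * Real.exp t)) := by
      linear_combination ((1:ℝ)-t) * Real.exp t * hE
    rw [h1]
    exact mul_pos (Real.exp_pos _) (p_pos ht)
  set A := (t-1)*Real.exp t + 1 + t*t*Real.exp (-t)
  set P := Real.exp (-t) * (2*t*t + t + 1) + (t-1)*Real.exp t
  have hm : 0 < min A P := lt_min hA hP
  have h2 : (1-l)*min A P + l*min A P ≤ (1-l)*A + l*P :=
    add_le_add (mul_le_mul_of_nonneg_left (min_le_left A P) (by linarith))
      (mul_le_mul_of_nonneg_left (min_le_right A P) hl0)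
  rw [hid]; nlinarith [hm, h2]

lemma Hq_strictMono {l : ℝ} (hl0 : 0 ≤ l) (hl1 : l ≤ 1) :
    StrictMonoOn (fun t => hfun l t / t) (Ioi 0) := by
  apply strictMonoOn_of_deriv_pos (convex_Ioi 0)
  · exact (hfun_continuous l).continuousOn.div continuousOn_id
      (fun x hx => ne_of_gt hx)
  · intro x hx
    rw [interior_Ioi] at hx
    have hx0 : (0:ℝ) < x := hx
    have hd : HasDerivAt (fun t => hfun l t / t)
        ((hderiv l x * x - hfun l x * 1) / x ^ 2) x :=
      (hasDerivAt_hfun l x).div (hasDerivAt_id' x) (ne_of_gt hx0)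
    rw [hd.deriv]
    apply div_pos _ (by positivity)
    have := q_pos hl0 hl1 hx0
    linarith

lemma keyIneq {k k' r : ℝ} (hk : 0 < k) (hk' : 0 < k') (hr : r ≤ 0) :
    k*k'/2 * hfun (min k k' / max k k') (-(k*r) / max k k') ≤
    k/2 * (k' * Ups (-r) - k * Ups r + (k+k') * (r * (Real.exp r - 1))) := by
  rcases le_total k' k with hc | hc
  · rw [max_eq_left hc, min_eq_right hc]
    have harg : -(k*r) / k = -r := by rw [mul_comm k r]; field_simp
    rw [harg]
    have hpos : 0 ≤ 1 - (1-r)*Real.exp r := by linarith [one_sub_exp_aux r]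
    have hco : 0 ≤ k - k'*k'/k := by
      rw [sub_nonneg, div_le_iff₀ hk]; nlinarith
    have key : k' * Ups (-r) - k * Ups r + (k+k') * (r * (Real.exp r - 1))
        - k' * hfun (k'/k) (-r) = (k - k'*k'/k) * (1 - (1-r)*Real.exp r) := by
      rw [hfun_eq]; simp only [Ups, neg_neg]; field_simp; ring
    have h2 : k' * hfun (k'/k) (-r)
        ≤ k' * Ups (-r) - k * Ups r + (k+k') * (r * (Real.exp r - 1)) := by
      nlinarith [mul_nonneg hco hpos]
    calc k*k'/2 * hfun (k'/k) (-r) = k/2 * (k' * hfun (k'/k) (-r)) := by ring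
      _ ≤ _ := mul_le_mul_of_nonneg_left h2 (by positivity)
  · rw [max_eq_right hc, min_eq_left hc]
    have harg : -(k*r) / k' = (k/k') * (-r) := by ring
    rw [harg]
    have hl0 : 0 ≤ k/k' := by positivity
    have hl1 : k/k' ≤ 1 := (div_le_one hk').2 hc
    have hmem1 : (k/k') * (-r) ∈ Ici (0:ℝ) :=
      mul_nonneg hl0 (by linarith)
    have hmem2 : -r ∈ Ici (0:ℝ) := by simp; linarith
    have hle : (k/k') * (-r) ≤ -r := by nlinarith
    have hmono := hfun_mono hl0 hmem1 hmem2 hle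
    have hident : k' * hfun (k/k') (-r)
        = k' * Ups (-r) - k * Ups r + (k+k') * (r * (Real.exp r - 1)) := by
      rw [hfun_eq]; simp only [Ups, neg_neg]; field_simp; ring
    calc k*k'/2 * hfun (k/k') ((k/k') * (-r))
        ≤ k*k'/2 * hfun (k/k') (-r) := by
          apply mul_le_mul_of_nonneg_left hmono (by positivity)
      _ = k/2 * (k' * hfun (k/k') (-r)) := by ring
      _ = _ := by rw [hident]

lemma psi2_nonneg {k k' r : ℝ} (hk : 0 < k) (hk' : 0 < k') :
    0 ≤ k/2 * (k' * Ups (-r) - k * Ups r + (k+k') * (r * (Real.exp r - 1))) := by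
  have h1 : 0 ≤ Ups (-r) := by
    simp only [Ups]; nlinarith [Real.add_one_le_exp (-r)]
  have h2 : 0 ≤ r * (Real.exp r - 1) := by
    rcases le_total 0 r with h | h
    · exact mul_nonneg h (by nlinarith [Real.add_one_le_exp r])
    · have hexp : Real.exp r ≤ 1 := by
        calc Real.exp r ≤ Real.exp 0 := Real.exp_le_exp.mpr h
          _ = 1 := Real.exp_zero
      nlinarith [mul_nonneg (neg_nonneg.2 h) (sub_nonneg.2 hexp)]
  have h3 : 0 ≤ r * (Real.exp r - 1) - Ups r := by
    simp only [Ups]; nlinarith [one_sub_exp_aux r]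
  nlinarith [mul_nonneg hk'.le (add_nonneg h1 h2), mul_nonneg hk.le h3,
    mul_nonneg hk.le (mul_nonneg hk'.le (add_nonneg h1 h2)),
    mul_nonneg hk.le (mul_nonneg hk.le h3)]

lemma minmax_div {a b : ℝ} (ha : 0 < a) (hb : 0 < b) :
    min (a/b) (b/a) = min a b / max a b := by
  rcases le_total a b with h | h
  · rw [min_eq_left ((div_le_div_iff₀ hb ha).2 (by nlinarith)), min_eq_left h,
      max_eq_right h]
  · rw [min_eq_right ((div_le_div_iff₀ ha hb).2 (by nlinarith)), min_eq_right h,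
      max_eq_left h]

lemma exp3_gt : (19:ℝ) < Real.exp 3 := by
  have h3 : Real.exp 3 = Real.exp 1 * Real.exp 1 * Real.exp 1 := by
    rw [← Real.exp_add, ← Real.exp_add]; norm_num
  nlinarith [Real.exp_one_gt_d9]

lemma hfun_lower {l t : ℝ} (hl0 : 0 ≤ l) (hl1 : l ≤ 1) (ht : 3 ≤ t) :
    Real.exp t / 2 ≤ hfun l t := by
  have hexp_t : 4*t + 2 ≤ Real.exp t := by
    have hsplit : Real.exp 3 * Real.exp (t-3) = Real.exp t := by
      rw [← Real.exp_add]; ring_nf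
    have h4 : t - 2 ≤ Real.exp (t-3) := by linarith [Real.add_one_le_exp (t-3)]
    have h5 : Real.exp 3 * (t-2) ≤ Real.exp 3 * Real.exp (t-3) :=
      mul_le_mul_of_nonneg_left h4 (Real.exp_pos 3).le
    nlinarith [exp3_gt]
  have hE1 : Real.exp (-t) ≤ 1 := by
    rw [← Real.exp_zero]; exact Real.exp_le_exp.mpr (by linarith)
  have hE0 : 0 < Real.exp (-t) := Real.exp_pos _
  rw [hfun_eq]
  have h5 : 0 ≤ (1+l)*t*(1 - Real.exp (-t)) :=
    mul_nonneg (mul_nonneg (by linarith) (by linarith)) (by linarith)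
  have h6 : l*(Real.exp (-t) + t - 1) ≤ Real.exp (-t) + t - 1 := by nlinarith
  linarith


lemma psi2_eq (a b : ℝ) (f : Bool → ℝ) (x : Bool) :
    psi2Ups2 a b f x = rate2 a b x / 2 *
      (rate2 a b (!x) * Ups (f x - f (!x)) - rate2 a b x * Ups (f (!x) - f x)
        + (rate2 a b x + rate2 a b (!x))
          * ((f (!x) - f x) * (Real.exp (f (!x) - f x) - 1))) := by
  cases x <;>
    simp only [psi2Ups2, gen2, psiUps2, bUps2, rate2, Bool.not_false, Bool.not_true,
      Bool.cond_true, Bool.cond_false] <;> ring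

/-- Example 2.4: on the two-point space with rates `a, b > 0` and
`λ = min{a/b, b/a}`, the function `F(r) = (ab/2) ν_{1+λ,λ}(-r/max{a,b})` is a
CD-function and `L` satisfies `CD_Υ(0,F)`. -/
theorem stmt_11 (a b : ℝ) (ha : 0 < a) (hb : 0 < b) :
    IsCDFunction (fun r =>
      a * b / 2 * nuFn (1 + min (a/b) (b/a)) (min (a/b) (b/a)) (-(r / max a b)))
    ∧ ∀ (f : Bool → ℝ) (x : Bool),
        trivExt (fun r =>
            a * b / 2 * nuFn (1 + min (a/b) (b/a)) (min (a/b) (b/a)) (-(r / max a b)))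
          (-gen2 a b f x) ≤ psi2Ups2 a b f x := by
  have hminmax := minmax_div ha hb
  have hM0 : 0 < max a b := lt_max_iff.2 (Or.inl ha)
  have hl0 : 0 < min (a/b) (b/a) := lt_min (div_pos ha hb) (div_pos hb ha)
  have hl1 : min (a/b) (b/a) ≤ 1 := by
    rcases le_total a b with h | h
    · exact le_trans (min_le_left _ _) ((div_le_one hb).2 h)
    · exact le_trans (min_le_right _ _) ((div_le_one ha).2 h)
  set l := min (a/b) (b/a) with hldef
  set M := max a b with hMdef
  have hFeq : (fun r : ℝ => a * b / 2 * nuFn (1 + l) l (-(r / M)))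
      = fun r : ℝ => a * b / 2 * hfun l (r / M) := rfl
  constructor
  · refine ⟨?_, ?_, ?_, ?_, ?_⟩
    · rw [hFeq]
      exact (continuous_const.mul ((hfun_continuous l).comp
        (continuous_id.div_const M))).continuousOn
    · show a * b / 2 * hfun l (0 / M) = 0
      rw [zero_div, hfun_zero]; ring
    · intro r hr
      show 0 ≤ a * b / 2 * hfun l (r / M)
      exact mul_nonneg (by positivity) (hfun_nonneg hl0.le (div_nonneg hr hM0.le))
    · intro x hx y hy hxy
      have hx0 : (0:ℝ) < x := hx
      have hy0 : (0:ℝ) < y := hy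
      have hH := Hq_strictMono hl0.le hl1 (show x/M ∈ Ioi 0 from div_pos hx0 hM0)
        (show y/M ∈ Ioi 0 from div_pos hy0 hM0) ((div_lt_div_iff_of_pos_right hM0).2 hxy)
      show a * b / 2 * hfun l (x / M) / x < a * b / 2 * hfun l (y / M) / y
      have e1 : ∀ z : ℝ, 0 < z →
          a * b / 2 * hfun l (z/M) / z = (a*b/(2*M)) * (hfun l (z/M)/(z/M)) := by
        intro z hz; field_simp
      rw [e1 x hx0, e1 y hy0]
      exact mul_lt_mul_of_pos_left hH (by positivity)
    · refine ⟨3*M, by positivity, ?_⟩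
      have hbound : ∀ r : ℝ, r ∈ Ioi (3*M) →
          a*b/4 * Real.exp (r/M) ≤ a * b / 2 * hfun l (r/M) := by
        intro r hr
        have ht : 3 ≤ r/M := by
          rw [le_div_iff₀ hM0]; linarith [mem_Ioi.1 hr]
        have := hfun_lower hl0.le hl1 ht
        nlinarith [mul_pos ha hb]
      have hgint : IntegrableOn (fun r : ℝ => 4/(a*b) * Real.exp (-(1/M) * r))
          (Ioi (3*M)) :=
        (exp_neg_integrableOn_Ioi (3*M) (by positivity)).const_mul _
      apply hgint.mono'
      · rw [hFeq]
        exact (measurable_const.div (continuous_const.mul ((hfun_continuous l).comp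
          (continuous_id.div_const M))).measurable).aestronglyMeasurable
      · rw [ae_restrict_iff' measurableSet_Ioi]
        apply ae_of_all
        intro r hr
        have hFr := hbound r hr
        have hFpos : 0 < a * b / 2 * hfun l (r/M) :=
          lt_of_lt_of_le (by positivity) hFr
        show ‖1 / (a * b / 2 * hfun l (r/M))‖ ≤ 4/(a*b) * Real.exp (-(1/M) * r)
        rw [Real.norm_eq_abs, abs_of_pos (by positivity)]
        have harg : -(1/M)*r = -(r/M) := by ring
        rw [harg, Real.exp_neg]
        have hrw : 4/(a*b) * (Real.exp (r/M))⁻¹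
            = 1 / (a*b/4 * Real.exp (r/M)) := by
          rw [eq_div_iff (by positivity)]
          field_simp
        rw [hrw]
        exact one_div_le_one_div_of_le (by positivity) hFr
  · intro f x
    have hk : 0 < rate2 a b x := by cases x <;> simpa [rate2]
    have hk' : 0 < rate2 a b (!x) := by cases x <;> simpa [rate2]
    have habk : a * b = rate2 a b x * rate2 a b (!x) := by
      cases x <;> simp [rate2] <;> ring
    have hmaxk : M = max (rate2 a b x) (rate2 a b (!x)) := by
      rw [hMdef]; cases x <;> simp [rate2, max_comm]
    have hmink : min a b = min (rate2 a b x) (rate2 a b (!x)) := by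
      cases x <;> simp [rate2, min_comm]
    rw [psi2_eq]
    show (if 0 ≤ -gen2 a b f x then
        a * b / 2 * nuFn (1 + l) l (-(-gen2 a b f x / M)) else 0) ≤ _
    by_cases h0 : 0 ≤ -gen2 a b f x
    · rw [if_pos h0]
      have hrle : f (!x) - f x ≤ 0 := by
        have hgen : gen2 a b f x = rate2 a b x * (f (!x) - f x) := rfl
        rw [hgen] at h0
        nlinarith [hk]
      have hKI := keyIneq (r := f (!x) - f x) hk hk' hrle
      rw [neg_sub] at hKI
      show a * b / 2 * hfun l (-gen2 a b f x / M) ≤ _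
      have hgen2 : -gen2 a b f x = -(rate2 a b x * (f (!x) - f x)) := rfl
      rw [hgen2, habk, hminmax, hmink, hmaxk]
      exact hKI
    · rw [if_neg h0]
      have := psi2_nonneg (r := f (!x) - f x) hk hk'
      rw [neg_sub] at this
      exact this
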